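/- Let K be a finite field and F a subfield of K, with q = |F| and ℓ = [K : F]. Let V be a K-vector space, n a positive integer, and (U₁, …, Uₙ) an n-tuple of F-submodules of V (V regarded as an F-vector space by restriction of scalars). If some Uᵢ is not closed under scalar multiplication by K, then Φ_ℓ(q) divides the cardinality of the (finite) set {(λ·U₁, …, λ·Uₙ) : λ ∈ Kˣ} of n-tuples of F-submodules, where λ·Uᵢ denotes the image of Uᵢ under v ↦ λ·v. -/

import Mathlib

open Pointwise

private lemma aux_cyclo_dvd (q d l N : ℕ) (hq : 2 ≤ q) (hd : 0 < d) (hl : 0 < l)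
    (hdl : d ∣ l) (hne : d ≠ l)
    (hN : q ^ l - 1 = N * (q ^ d - 1)) :
    ((Polynomial.cyclotomic l ℤ).eval (q : ℤ)) ∣ (N : ℤ) := by
  have hq1d : (1:ℕ) ≤ q ^ d := Nat.one_le_pow _ _ (by omega)
  have hq1l : (1:ℕ) ≤ q ^ l := Nat.one_le_pow _ _ (by omega)
  have hprod : ∀ m : ℕ, 0 < m →
      ((q:ℤ)^m - 1) = ∏ i ∈ m.divisors, (Polynomial.cyclotomic i ℤ).eval (q:ℤ) := by
    intro m hm
    have h := congrArg (Polynomial.eval (q:ℤ))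
      (Polynomial.prod_cyclotomic_eq_X_pow_sub_one hm ℤ)
    simpa [Polynomial.eval_prod] using h.symm
  have hnotmem : l ∉ d.divisors := fun h =>
    hne (Nat.dvd_antisymm hdl (Nat.mem_divisors.mp h).1)
  have hsub : insert l d.divisors ⊆ l.divisors := by
    intro x hx
    rcases Finset.mem_insert.mp hx with rfl | hx
    · exact Nat.mem_divisors_self _ hl.ne'
    · exact Nat.divisors_subset_of_dvd hl.ne' hdl hx
  have hdvd : (Polynomial.cyclotomic l ℤ).eval (q:ℤ) * ((q:ℤ)^d - 1) ∣ (q:ℤ)^l - 1 := by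
    rw [hprod l hl, hprod d hd,
      ← Finset.prod_insert (f := fun i => (Polynomial.cyclotomic i ℤ).eval (q:ℤ)) hnotmem]
    exact Finset.prod_dvd_prod_of_subset _ _ _ hsub
  have hcast : ((q:ℤ)^l - 1) = (N:ℤ) * ((q:ℤ)^d - 1) := by
    zify [hq1d, hq1l] at hN
    exact hN
  rw [hcast] at hdvd
  have hB : ((q:ℤ)^d - 1) ≠ 0 := by
    have h2 : (2:ℤ) ≤ (q:ℤ) := by exact_mod_cast hq
    have : (1:ℤ) < (q:ℤ)^d := one_lt_pow₀ (by omega) hd.ne'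
    omega
  exact (mul_dvd_mul_iff_right hB).mp hdvd

/-- Let `F ⊆ K` be finite fields with `q = |F|` and `ℓ = [K : F]`, let `V` be a `K`-vector
space, `n > 0`, and `(U₁, …, Uₙ)` an `n`-tuple of `F`-submodules of `V`.  If some `Uᵢ` is not
closed under scalar multiplication by `K`, then `Φ_ℓ(q)` divides the cardinality of the
diagonal orbit `{(λ·U₁, …, λ·Uₙ) : λ ∈ Kˣ}`. -/
theorem cyclotomic_dvd_card_orbit_of_submodule_tuple (F K V : Type*) [Field F] [Field K]
    [Algebra F K] [Finite F] [Finite K] [AddCommGroup V] [Module K V] [Module F V]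
    [IsScalarTower F K V] (n : ℕ) (hn : 0 < n) (U : Fin n → Submodule F V)
    (hU : ∃ (i : Fin n) (c : K) (u : V), u ∈ U i ∧ c • u ∉ U i) :
    ((Polynomial.cyclotomic (Module.finrank F K) ℤ).eval (Nat.card F : ℤ)) ∣
      (Nat.card (Set.range fun c : Kˣ => fun i : Fin n =>
        Submodule.map ((LinearMap.lsmul K V (c : K)).restrictScalars F) (U i)) : ℤ) := by
  classical
  obtain ⟨i₀, c₀, u₀, hu₀, hcu₀⟩ := hU
  have : Fintype K := Fintype.ofFinite K
  have : Fintype F := Fintype.ofFinite F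
  -- the subalgebra of scalars stabilizing every `U i`
  set E : Subalgebra F K :=
    { carrier := {c : K | ∀ i, ∀ u ∈ U i, c • u ∈ U i}
      mul_mem' := fun {a b} ha hb i u hu => by
        rw [mul_smul]; exact ha i _ (hb i u hu)
      one_mem' := fun i u hu => by rwa [one_smul]
      add_mem' := fun {a b} ha hb i u hu => by
        rw [add_smul]; exact (U i).add_mem (ha i u hu) (hb i u hu)
      zero_mem' := fun i u hu => by rw [zero_smul]; exact (U i).zero_mem
      algebraMap_mem' := fun r i u hu => by
        rw [algebraMap_smul]; exact (U i).smul_mem r hu } with hEdef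
  have hmemE : ∀ x : K, x ∈ E ↔ ∀ i, ∀ u ∈ U i, x • u ∈ U i := fun x => Iff.rfl
  have hinv : ∀ x ∈ E, x⁻¹ ∈ E := by
    intro x hx
    rcases eq_or_ne x 0 with rfl | hx0
    · simpa using E.zero_mem
    · have h1 : x ^ (Fintype.card K - 1) = 1 := FiniteField.pow_card_sub_one_eq_one x hx0
      have hcard : 2 ≤ Fintype.card K := Fintype.one_lt_card
      have h3 : x * x ^ (Fintype.card K - 2) = 1 := by
        have he : Fintype.card K - 2 + 1 = Fintype.card K - 1 := by omega
        rw [← pow_succ', he, h1]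
      rw [inv_eq_of_mul_eq_one_right h3]
      exact pow_mem hx _
  let L : IntermediateField F K := E.toIntermediateField hinv
  have hc₀ : c₀ ∉ E := fun h => hcu₀ (h i₀ u₀ hu₀)
  -- ranks
  have htower : Module.finrank F L * Module.finrank L K = Module.finrank F K :=
    Module.finrank_mul_finrank F L K
  have hdl : Module.finrank F L ∣ Module.finrank F K := ⟨Module.finrank L K, htower.symm⟩
  have hElt : Subalgebra.toSubmodule E < ⊤ := by
    refine lt_top_iff_ne_top.mpr fun h => hc₀ ?_
    have : c₀ ∈ Subalgebra.toSubmodule E := h ▸ Submodule.mem_top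
    exact this
  have hlt : Module.finrank F L < Module.finrank F K :=
    Submodule.finrank_lt (K := F) (V := K) hElt.ne
  have hdpos : 0 < Module.finrank F L := Module.finrank_pos
  have hlpos : 0 < Module.finrank F K := Module.finrank_pos
  -- cardinalities
  have hcardK : Fintype.card K = Fintype.card F ^ Module.finrank F K := Module.card_eq_pow_finrank
  have : Fintype L := Fintype.ofFinite L
  have hcardL : Fintype.card L = Fintype.card F ^ Module.finrank F L := Module.card_eq_pow_finrank
  -- pointwise smul membership
  have hmem_smul : ∀ (c : Kˣ) (S : Submodule F V) (v : V),
      v ∈ c • S ↔ ∃ u ∈ S, (c : K) • u = v := by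
    intro c S v
    rw [← SetLike.mem_coe]
    change v ∈ c • (S : Set V) ↔ _
    rw [Set.mem_smul_set]
    simp [Units.smul_def]
  -- identify the range with the orbit
  have hg : (fun c : Kˣ => fun i : Fin n =>
      Submodule.map ((LinearMap.lsmul K V (c : K)).restrictScalars F) (U i))
      = fun c : Kˣ => c • U := by
    funext c i
    show _ = c • U i
    ext v
    simp only [Submodule.mem_map, LinearMap.coe_restrictScalars, LinearMap.lsmul_apply,
      hmem_smul]
  have horbit : (Set.range fun c : Kˣ => fun i : Fin n =>
      Submodule.map ((LinearMap.lsmul K V (c : K)).restrictScalars F) (U i))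
      = MulAction.orbit Kˣ U := by rw [hg]; rfl
  -- stabilizer membership
  have hstab : ∀ c : Kˣ, c ∈ MulAction.stabilizer Kˣ U ↔ (c : K) ∈ E := by
    intro c
    constructor
    · intro hc
      rw [hmemE]
      intro i u hu
      have h1 : c • U i = U i := congrFun hc i
      have : c • u ∈ c • U i := Submodule.smul_mem_pointwise_smul u c (U i) hu
      rwa [h1, Units.smul_def] at this
    · intro hc
      have hcinv : ((c : K))⁻¹ ∈ E := hinv _ hc
      show c • U = U
      funext i
      refine le_antisymm ?_ ?_
      · intro v hv
        obtain ⟨u, hu, rfl⟩ := (hmem_smul _ _ _).mp hv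
        exact (hmemE _).mp hc i u hu
      · intro u hu
        refine (hmem_smul _ _ _).mpr
          ⟨(c : K)⁻¹ • u, (hmemE _).mp hcinv i u hu, ?_⟩
        rw [smul_smul, mul_inv_cancel₀ (Units.ne_zero c), one_smul]
  -- the stabilizer is the unit group of `L`
  let e2 : (MulAction.stabilizer Kˣ U) ≃ Lˣ :=
  { toFun := fun c => Units.mk0 (⟨((c : Kˣ) : K), (hstab _).mp c.2⟩ : L)
      (by simp only [ne_eq, Subtype.ext_iff]; exact Units.ne_zero _)
    invFun := fun x => ⟨Units.mk0 ((x : L) : K)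
        (by simpa using (Units.ne_zero x)), (hstab _).mpr (x : L).2⟩
    left_inv := fun c => by ext; rfl
    right_inv := fun x => by ext; rfl }
  -- orbit counting
  have hcount : Nat.card Kˣ =
      Nat.card (MulAction.orbit Kˣ U) * Nat.card Lˣ := by
    rw [Subgroup.card_eq_card_quotient_mul_card_subgroup (MulAction.stabilizer Kˣ U),
      Nat.card_congr (MulAction.orbitEquivQuotientStabilizer Kˣ U), Nat.card_congr e2]
  -- put the numbers together
  have hcardKu : Nat.card Kˣ = Fintype.card F ^ Module.finrank F K - 1 := by
    rw [Nat.card_eq_fintype_card, Fintype.card_units, hcardK]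
  have hcardLu : Nat.card Lˣ = Fintype.card F ^ Module.finrank F L - 1 := by
    rw [Nat.card_eq_fintype_card, Fintype.card_units, hcardL]
  have hNeq : Fintype.card F ^ Module.finrank F K - 1 =
      Nat.card (MulAction.orbit Kˣ U) * (Fintype.card F ^ Module.finrank F L - 1) := by
    rw [← hcardKu, ← hcardLu, hcount]
  have hq2 : 2 ≤ Fintype.card F := Fintype.one_lt_card
  have hdvd := aux_cyclo_dvd (Fintype.card F) (Module.finrank F L) (Module.finrank F K)
    (Nat.card (MulAction.orbit Kˣ U)) hq2 hdpos hlpos hdl hlt.ne hNeq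
  rw [Nat.card_eq_fintype_card (α := F), horbit]
  exact hdvd
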